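/- Let L be a semiprime symmetric Leibniz algebra over a field F which is a subalgebra of a symmetric Leibniz algebra Q, and suppose Q is an algebra of quotients of L. Let A(Q) be the associative subalgebra of End_F(Q) generated by the right and left multiplication operators of Q, and let A_0 = {μ ∈ A(Q) : μ(L) ⊆ L}. Then A(Q) is a left quotient algebra of A_0, i.e., for all p, q ∈ A(Q) with p ≠ 0 there exists x ∈ A_0 such that xp ≠ 0 and xq ∈ A_0. -/

import Mathlib

namespace LeibnizQuot

variable {F : Type*} [Field F] {Q : Type*} [AddCommGroup Q] [Module F Q]

/-- The right Leibniz identity `[x,[y,z]] = [[x,y],z] - [[x,z],y]`. -/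
def IsRightLeibniz (b : Q →ₗ[F] Q →ₗ[F] Q) : Prop :=
  ∀ x y z : Q, b x (b y z) = b (b x y) z - b (b x z) y

/-- The left Leibniz identity `[x,[y,z]] = [[x,y],z] + [y,[x,z]]`. -/
def IsLeftLeibniz (b : Q →ₗ[F] Q →ₗ[F] Q) : Prop :=
  ∀ x y z : Q, b x (b y z) = b (b x y) z + b y (b x z)

/-- `I` is an ideal of the whole Leibniz algebra: `[I,L] ⊆ I` and `[L,I] ⊆ I`. -/
def IsIdeal (b : Q →ₗ[F] Q →ₗ[F] Q) (I : Submodule F Q) : Prop :=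
  ∀ x ∈ I, ∀ y : Q, b x y ∈ I ∧ b y x ∈ I

/-- Left annihilator of a subset. -/
def lanSet (b : Q →ₗ[F] Q →ₗ[F] Q) (S : Set Q) : Set Q := {x : Q | ∀ h ∈ S, b x h = 0}

/-- Right annihilator of a subset. -/
def ranSet (b : Q →ₗ[F] Q →ₗ[F] Q) (S : Set Q) : Set Q := {x : Q | ∀ h ∈ S, b h x = 0}

/-- Annihilator of a subset. -/
def annSet (b : Q →ₗ[F] Q →ₗ[F] Q) (S : Set Q) : Set Q := lanSet b S ∩ ranSet b S

/-- The algebra is semiprime: `[I,I] ≠ {0}` for every nonzero ideal `I`. -/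
def IsSemiprime (b : Q →ₗ[F] Q →ₗ[F] Q) : Prop :=
  ∀ I : Submodule F Q, IsIdeal b I → I ≠ ⊥ → ∃ x ∈ I, ∃ y ∈ I, b x y ≠ 0

/-- The algebra is prime: `[I,J] ≠ {0}` for all nonzero ideals `I`, `J`. -/
def IsPrime (b : Q →ₗ[F] Q →ₗ[F] Q) : Prop :=
  ∀ I J : Submodule F Q, IsIdeal b I → IsIdeal b J → I ≠ ⊥ → J ≠ ⊥ →
    ∃ x ∈ I, ∃ y ∈ J, b x y ≠ 0

/-- An ideal is essential if it meets every nonzero ideal nontrivially. -/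
def IsEssential (b : Q →ₗ[F] Q →ₗ[F] Q) (I : Submodule F Q) : Prop :=
  IsIdeal b I ∧ ∀ J : Submodule F Q, IsIdeal b J → J ≠ ⊥ → I ⊓ J ≠ ⊥

/-- `L` is a subalgebra of the ambient Leibniz algebra. -/
def IsSubalgebraOf (b : Q →ₗ[F] Q →ₗ[F] Q) (L : Submodule F Q) : Prop :=
  ∀ x ∈ L, ∀ y ∈ L, b x y ∈ L

/-- `I` is an ideal of the subalgebra `L`. -/
def IsIdealOf (b : Q →ₗ[F] Q →ₗ[F] Q) (L I : Submodule F Q) : Prop :=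
  I ≤ L ∧ ∀ x ∈ I, ∀ y ∈ L, b x y ∈ I ∧ b y x ∈ I

/-- `I` is an essential ideal of the subalgebra `L`. -/
def IsEssentialIdealOf (b : Q →ₗ[F] Q →ₗ[F] Q) (L I : Submodule F Q) : Prop :=
  IsIdealOf b L I ∧ ∀ J : Submodule F Q, IsIdealOf b L J → J ≠ ⊥ → I ⊓ J ≠ ⊥

/-- The subalgebra `L` is semiprime. -/
def IsSemiprimeSub (b : Q →ₗ[F] Q →ₗ[F] Q) (L : Submodule F Q) : Prop :=
  ∀ I : Submodule F Q, IsIdealOf b L I → I ≠ ⊥ → ∃ x ∈ I, ∃ y ∈ I, b x y ≠ 0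

/-- The subalgebra `L` is prime. -/
def IsPrimeSub (b : Q →ₗ[F] Q →ₗ[F] Q) (L : Submodule F Q) : Prop :=
  ∀ I J : Submodule F Q, IsIdealOf b L I → IsIdealOf b L J → I ≠ ⊥ → J ≠ ⊥ →
    ∃ x ∈ I, ∃ y ∈ J, b x y ≠ 0

/-- Left annihilator of `S` inside the subalgebra `L`. -/
def lanIn (b : Q →ₗ[F] Q →ₗ[F] Q) (L : Submodule F Q) (S : Set Q) : Set Q :=
  {x : Q | x ∈ L ∧ ∀ s ∈ S, b x s = 0}

/-- Right annihilator of `S` inside the subalgebra `L`. -/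
def ranIn (b : Q →ₗ[F] Q →ₗ[F] Q) (L : Submodule F Q) (S : Set Q) : Set Q :=
  {x : Q | x ∈ L ∧ ∀ s ∈ S, b s x = 0}

/-- Annihilator of `S` inside the subalgebra `L`. -/
def annIn (b : Q →ₗ[F] Q →ₗ[F] Q) (L : Submodule F Q) (S : Set Q) : Set Q :=
  lanIn b L S ∩ ranIn b L S

/-- The right and left multiplication operators `R_x : p ↦ [p,x]` and `L_y : p ↦ [y,p]`
with `x, y ∈ S`. -/
def mulOps (b : Q →ₗ[F] Q →ₗ[F] Q) (S : Set Q) : Set (Module.End F Q) :=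
  {f : Module.End F Q | ∃ x ∈ S, f = b.flip x ∨ f = b x}

/-- The set `_L(q)`: the linear span of `q` together with all `ξ(q)`, where `ξ` lies in the
associative algebra of endomorphisms generated by multiplication operators by elements of `L`. -/
def LqSet (b : Q →ₗ[F] Q →ₗ[F] Q) (L : Submodule F Q) (q : Q) : Set Q :=
  {p : Q | ∃ ξ ∈ Algebra.adjoin F (mulOps b (L : Set Q)), ξ q = p}

/-- The set `(L : q) = {x ∈ L : [x, _L(q)] ⊆ L and [_L(q), x] ⊆ L}`. -/
def LcolonSet (b : Q →ₗ[F] Q →ₗ[F] Q) (L : Submodule F Q) (q : Q) : Set Q :=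
  {x : Q | x ∈ L ∧ ∀ p ∈ LqSet b L q, b x p ∈ L ∧ b p x ∈ L}

/-- The ambient algebra is an algebra of quotients of the subalgebra `L`. -/
def IsAlgebraOfQuotients (b : Q →ₗ[F] Q →ₗ[F] Q) (L : Submodule F Q) : Prop :=
  ∀ p q : Q, p ≠ 0 →
    (∃ x ∈ LcolonSet b L q, b x p ≠ 0) ∨ (∃ y ∈ LcolonSet b L q, b p y ≠ 0)

/-- The ambient algebra is a weak algebra of quotients of the subalgebra `L`. -/
def IsWeakAlgebraOfQuotients (b : Q →ₗ[F] Q →ₗ[F] Q) (L : Submodule F Q) : Prop :=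
  ∀ q : Q, q ≠ 0 →
    (∃ x ∈ L, b q x ≠ 0 ∧ b q x ∈ L) ∨ (∃ y ∈ L, b y q ≠ 0 ∧ b y q ∈ L)

/-- The ambient algebra is ideally absorbed into the subalgebra `L`. -/
def IsIdeallyAbsorbed (b : Q →ₗ[F] Q →ₗ[F] Q) (L : Submodule F Q) : Prop :=
  ∀ q : Q, q ≠ 0 → ∃ I : Submodule F Q, IsIdealOf b L I ∧
    annIn b L (I : Set Q) = {0} ∧
    ((∃ x ∈ I, b x q ≠ 0) ∨ (∃ x ∈ I, b q x ≠ 0)) ∧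
    (∀ x ∈ I, b x q ∈ L ∧ b q x ∈ L)

/-- The span of `[I,I]` (more generally, of `[I,J]`). -/
def bracketSpan (b : Q →ₗ[F] Q →ₗ[F] Q) (I J : Submodule F Q) : Submodule F Q :=
  Submodule.span F {z : Q | ∃ x ∈ I, ∃ y ∈ J, z = b x y}

/-- `Fam` is a power filter of (nonzero) sturdy ideals of the subalgebra `L`. -/
def IsPowerFilterOfSturdyIdeals (b : Q →ₗ[F] Q →ₗ[F] Q) (L : Submodule F Q)
    (Fam : Set (Submodule F Q)) : Prop :=
  Fam.Nonempty ∧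
  (∀ I ∈ Fam, IsIdealOf b L I ∧ I ≠ ⊥ ∧ annIn b L (I : Set Q) = {0}) ∧
  (∀ I₁ ∈ Fam, ∀ I₂ ∈ Fam, ∃ I ∈ Fam, I ≤ I₁ ⊓ I₂) ∧
  (∀ I ∈ Fam, ∃ K ∈ Fam, K ≤ bracketSpan b I I)

/-- The ambient algebra is a Leibniz algebra of Martindale-like quotients of `L`
with respect to the family `Fam`. -/
def IsMartindaleQuotients (b : Q →ₗ[F] Q →ₗ[F] Q) (L : Submodule F Q)
    (Fam : Set (Submodule F Q)) : Prop :=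
  ∀ q : Q, q ≠ 0 → ∃ I ∈ Fam,
    ((∃ x ∈ I, b q x ≠ 0) ∨ (∃ x ∈ I, b x q ≠ 0)) ∧
    (∀ x ∈ I, b q x ∈ L ∧ b x q ∈ L)


/-! ### Auxiliary development for STATEMENT 19 -/

section Aux19

variable (b : Q →ₗ[F] Q →ₗ[F] Q) (L : Submodule F Q)

/-- Multiplication operator attached to a tagged letter: `(z, true) ↦ L_z`,
`(z, false) ↦ R_z`. -/
noncomputable def opL (ℓ : Q × Bool) : Module.End F Q :=
  if ℓ.2 then b ℓ.1 else b.flip ℓ.1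

/-- Evaluation of a word of letters as a product of multiplication operators
(head of the list is the outermost operator). -/
noncomputable def evalW (w : List (Q × Bool)) : Module.End F Q :=
  (w.map (opL b)).prod

@[simp] lemma evalW_nil : evalW b ([] : List (Q × Bool)) = 1 := rfl

@[simp] lemma evalW_cons (ℓ : Q × Bool) (w : List (Q × Bool)) :
    evalW b (ℓ :: w) = opL b ℓ * evalW b w := by
  simp [evalW]

@[simp] lemma evalW_append (w₁ w₂ : List (Q × Bool)) :
    evalW b (w₁ ++ w₂) = evalW b w₁ * evalW b w₂ := by
  simp [evalW]

open Classical in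
/-- Number of letters of a word whose underlying element is not in `L`. -/
noncomputable def vcnt : List (Q × Bool) → ℕ
  | [] => 0
  | ℓ :: w => (if ℓ.1 ∈ L then 0 else 1) + vcnt w

open Classical in
lemma vcnt_nil : vcnt L ([] : List (Q × Bool)) = 0 := rfl

open Classical in
lemma vcnt_cons (ℓ : Q × Bool) (w : List (Q × Bool)) :
    vcnt L (ℓ :: w) = (if ℓ.1 ∈ L then 0 else 1) + vcnt L w := rfl

lemma vcnt_append (w₁ w₂ : List (Q × Bool)) :
    vcnt L (w₁ ++ w₂) = vcnt L w₁ + vcnt L w₂ := by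
  induction w₁ with
  | nil => simp [vcnt]
  | cons ℓ w ih => simp [vcnt_cons, ih]; omega

lemma vcnt_le_length (w : List (Q × Bool)) : vcnt L w ≤ w.length := by
  induction w with
  | nil => simp [vcnt]
  | cons ℓ w ih =>
    rw [vcnt_cons]
    split <;> simp <;> omega

lemma vcnt_eq_zero (w : List (Q × Bool)) (h : vcnt L w = 0) : ∀ ℓ ∈ w, ℓ.1 ∈ L := by
  induction w with
  | nil => simp
  | cons ℓ w ih =>
    rw [vcnt_cons] at h
    intro ℓ' hℓ'
    rcases List.mem_cons.1 hℓ' with rfl | hmem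
    · by_contra hc
      rw [if_neg hc] at h; omega
    · exact ih (by omega) ℓ' hmem

lemma opL_mem_L (hL : IsSubalgebraOf b L) {ℓ : Q × Bool} (hℓ : ℓ.1 ∈ L)
    {x : Q} (hx : x ∈ L) : opL b ℓ x ∈ L := by
  obtain ⟨z, t⟩ := ℓ
  cases t
  · simpa [opL] using hL x hx z hℓ
  · simpa [opL] using hL z hℓ x hx

lemma evalW_mem_L (hL : IsSubalgebraOf b L) :
    ∀ (w : List (Q × Bool)), (∀ ℓ ∈ w, ℓ.1 ∈ L) → ∀ l ∈ L, evalW b w l ∈ L := by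
  intro w
  induction w with
  | nil => intro _ l hl; simpa using hl
  | cons ℓ w ih =>
    intro hw l hl
    have h1 : evalW b w l ∈ L := ih (fun ℓ' h => hw ℓ' (List.mem_cons_of_mem _ h)) l hl
    simpa [Module.End.mul_apply] using opL_mem_L b L hL (hw ℓ (List.mem_cons_self)) h1

/-! #### `LqSet` facts -/

lemma self_mem_LqSet (v : Q) : v ∈ LqSet b L v :=
  ⟨1, one_mem _, rfl⟩

lemma LqSet_bl {v l m : Q} (hl : l ∈ L) (hm : m ∈ LqSet b L v) :
    b l m ∈ LqSet b L v := by
  obtain ⟨ξ, hξ, rfl⟩ := hm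
  exact ⟨(b l : Module.End F Q) * ξ,
    mul_mem (Algebra.subset_adjoin ⟨l, hl, Or.inr rfl⟩) hξ, rfl⟩

lemma LqSet_br {v l m : Q} (hl : l ∈ L) (hm : m ∈ LqSet b L v) :
    b m l ∈ LqSet b L v := by
  obtain ⟨ξ, hξ, rfl⟩ := hm
  exact ⟨(b.flip l : Module.End F Q) * ξ,
    mul_mem (Algebra.subset_adjoin ⟨l, hl, Or.inl rfl⟩) hξ, rfl⟩

lemma opL_mem_LqSet {z l : Q} (hl : l ∈ L) (t : Bool) :
    opL b (z, t) l ∈ LqSet b L z := by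
  cases t
  · exact ⟨(b l : Module.End F Q),
      Algebra.subset_adjoin ⟨l, hl, Or.inr rfl⟩, rfl⟩
  · exact ⟨(b.flip l : Module.End F Q),
      Algebra.subset_adjoin ⟨l, hl, Or.inl rfl⟩, rfl⟩

/-! #### The ideal `(L : v)` as a submodule -/

/-- `(L : v)` as a submodule. -/
noncomputable def colonSub (v : Q) : Submodule F Q where
  carrier := LcolonSet b L v
  add_mem' := by
    rintro x y ⟨hxL, hx⟩ ⟨hyL, hy⟩
    refine ⟨add_mem hxL hyL, fun p hp => ?_⟩
    constructor
    · rw [map_add, LinearMap.add_apply]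
      exact add_mem (hx p hp).1 (hy p hp).1
    · rw [map_add]
      exact add_mem (hx p hp).2 (hy p hp).2
  zero_mem' := by
    refine ⟨zero_mem L, fun p hp => ?_⟩
    constructor
    · rw [map_zero, LinearMap.zero_apply]; exact zero_mem L
    · rw [map_zero]; exact zero_mem L
  smul_mem' := by
    rintro c x ⟨hxL, hx⟩
    refine ⟨Submodule.smul_mem L c hxL, fun p hp => ?_⟩
    constructor
    · rw [map_smul, LinearMap.smul_apply]
      exact Submodule.smul_mem L c (hx p hp).1
    · rw [map_smul]
      exact Submodule.smul_mem L c (hx p hp).2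

lemma mem_colonSub {v x : Q} :
    x ∈ colonSub b L v ↔ x ∈ L ∧ ∀ p ∈ LqSet b L v, b x p ∈ L ∧ b p x ∈ L :=
  Iff.rfl

lemma colonSub_opL {v x : Q} (hx : x ∈ colonSub b L v) {m : Q}
    (hm : m ∈ LqSet b L v) (t : Bool) : opL b (x, t) m ∈ L := by
  cases t
  · simpa [opL] using (hx.2 m hm).2
  · simpa [opL] using (hx.2 m hm).1

lemma colonSub_isIdeal (hbr : IsRightLeibniz b) (hL : IsSubalgebraOf b L) (v : Q) :
    IsIdealOf b L (colonSub b L v) := by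
  refine ⟨fun x hx => hx.1, fun x hx y hy => ?_⟩
  obtain ⟨hxL, hx2⟩ := hx
  constructor
  · refine ⟨hL x hxL y hy, fun p hp => ⟨?_, ?_⟩⟩
    · have h := hbr x y p
      have e : b (b x y) p = b x (b y p) + b (b x p) y := by rw [h]; abel
      rw [e]
      exact add_mem (hx2 _ (LqSet_bl b L hy hp)).1 (hL _ (hx2 p hp).1 y hy)
    · rw [hbr p x y]
      exact sub_mem (hL _ (hx2 p hp).2 y hy) (hx2 _ (LqSet_br b L hy hp)).2
  · refine ⟨hL y hy x hxL, fun p hp => ⟨?_, ?_⟩⟩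
    · have h := hbr y x p
      have e : b (b y x) p = b y (b x p) + b (b y p) x := by rw [h]; abel
      rw [e]
      exact add_mem (hL y hy _ (hx2 p hp).1) (hx2 _ (LqSet_bl b L hy hp)).2
    · rw [hbr p y x]
      exact sub_mem (hx2 _ (LqSet_br b L hy hp)).2 (hL _ (hx2 p hp).2 y hy)

/-! #### Annihilators -/

/-- The annihilator of `I` inside `L`, as a submodule. -/
noncomputable def annLSub (I : Submodule F Q) : Submodule F Q where
  carrier := {x | x ∈ L ∧ ∀ a ∈ I, b x a = 0 ∧ b a x = 0}
  add_mem' := by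
    rintro x y ⟨hxL, hx⟩ ⟨hyL, hy⟩
    refine ⟨add_mem hxL hyL, fun a ha => ?_⟩
    constructor
    · rw [map_add, LinearMap.add_apply, (hx a ha).1, (hy a ha).1, add_zero]
    · rw [map_add, (hx a ha).2, (hy a ha).2, add_zero]
  zero_mem' := by
    refine ⟨zero_mem L, fun a ha => ?_⟩
    simp
  smul_mem' := by
    rintro c x ⟨hxL, hx⟩
    refine ⟨Submodule.smul_mem L c hxL, fun a ha => ?_⟩
    constructor
    · rw [map_smul, LinearMap.smul_apply, (hx a ha).1, smul_zero]
    · rw [map_smul, (hx a ha).2, smul_zero]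

lemma mem_annLSub {I : Submodule F Q} {x : Q} :
    x ∈ annLSub b L I ↔ x ∈ L ∧ ∀ a ∈ I, b x a = 0 ∧ b a x = 0 :=
  Iff.rfl

lemma annLSub_isIdeal (hbr : IsRightLeibniz b) (hL : IsSubalgebraOf b L)
    {I : Submodule F Q} (hI : IsIdealOf b L I) : IsIdealOf b L (annLSub b L I) := by
  refine ⟨fun x hx => hx.1, fun x hx y hy => ?_⟩
  obtain ⟨hxL, hx2⟩ := hx
  constructor
  · refine ⟨hL x hxL y hy, fun a ha => ⟨?_, ?_⟩⟩
    · have h := hbr x y a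
      have e : b (b x y) a = b x (b y a) + b (b x a) y := by rw [h]; abel
      rw [e, (hx2 _ (hI.2 a ha y hy).2).1, (hx2 a ha).1]
      simp
    · rw [hbr a x y, (hx2 a ha).2, (hx2 _ (hI.2 a ha y hy).1).2]
      simp
  · refine ⟨hL y hy x hxL, fun a ha => ⟨?_, ?_⟩⟩
    · have h := hbr y x a
      have e : b (b y x) a = b y (b x a) + b (b y a) x := by rw [h]; abel
      rw [e, (hx2 a ha).1, (hx2 _ (hI.2 a ha y hy).2).2]
      simp
    · rw [hbr a y x, (hx2 _ (hI.2 a ha y hy).1).2, (hx2 a ha).2]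
      simp

lemma inf_isIdeal {I J : Submodule F Q} (hI : IsIdealOf b L I)
    (hJ : IsIdealOf b L J) : IsIdealOf b L (I ⊓ J) := by
  refine ⟨le_trans inf_le_left hI.1, fun x hx y hy => ?_⟩
  rw [Submodule.mem_inf] at hx
  exact ⟨Submodule.mem_inf.2 ⟨(hI.2 x hx.1 y hy).1, (hJ.2 x hx.2 y hy).1⟩,
    Submodule.mem_inf.2 ⟨(hI.2 x hx.1 y hy).2, (hJ.2 x hx.2 y hy).2⟩⟩

lemma L_isIdeal (hL : IsSubalgebraOf b L) : IsIdealOf b L L :=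
  ⟨le_rfl, fun x hx y hy => ⟨hL x hx y hy, hL y hy x hx⟩⟩

lemma semiprime_bot (hsp : IsSemiprimeSub b L) {J : Submodule F Q}
    (hJ : IsIdealOf b L J) (hz : ∀ x ∈ J, ∀ y ∈ J, b x y = 0) : J = ⊥ := by
  by_contra h
  obtain ⟨x, hx, y, hy, hne⟩ := hsp J hJ h
  exact hne (hz x hx y hy)

lemma annLSub_L_bot (hbr : IsRightLeibniz b) (hL : IsSubalgebraOf b L)
    (hsp : IsSemiprimeSub b L) : annLSub b L L = ⊥ := by
  refine semiprime_bot b L hsp (annLSub_isIdeal b L hbr hL (L_isIdeal b L hL)) ?_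
  intro x hx y hy
  exact (hx.2 y hy.1).1

lemma annLSub_inf_bot (hbr : IsRightLeibniz b) (hL : IsSubalgebraOf b L)
    (hsp : IsSemiprimeSub b L) {I J : Submodule F Q}
    (hI : IsIdealOf b L I) (hJ : IsIdealOf b L J)
    (haI : annLSub b L I = ⊥) (haJ : annLSub b L J = ⊥) :
    annLSub b L (I ⊓ J) = ⊥ := by
  have hIJ : IsIdealOf b L (I ⊓ J) := inf_isIdeal b L hI hJ
  have hKid : IsIdealOf b L (annLSub b L (I ⊓ J)) := annLSub_isIdeal b L hbr hL hIJ
  have h1 : annLSub b L (I ⊓ J) ⊓ (I ⊓ J) = ⊥ := by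
    refine semiprime_bot b L hsp (inf_isIdeal b L hKid hIJ) ?_
    intro x hx y hy
    exact (hx.1.2 y hy.2).1
  have h2 : annLSub b L (I ⊓ J) ⊓ I ≤ annLSub b L J := by
    intro x hx
    rw [Submodule.mem_inf] at hx
    have hxL : x ∈ L := hx.1.1
    refine ⟨hxL, fun a ha => ?_⟩
    have haL : a ∈ L := hJ.1 ha
    have hxa : b x a ∈ annLSub b L (I ⊓ J) ⊓ (I ⊓ J) :=
      Submodule.mem_inf.2 ⟨(hKid.2 _ hx.1 a haL).1,
        Submodule.mem_inf.2 ⟨(hI.2 _ hx.2 a haL).1, (hJ.2 a ha x hxL).2⟩⟩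
    have hax : b a x ∈ annLSub b L (I ⊓ J) ⊓ (I ⊓ J) :=
      Submodule.mem_inf.2 ⟨(hKid.2 _ hx.1 a haL).2,
        Submodule.mem_inf.2 ⟨(hI.2 _ hx.2 a haL).2, (hJ.2 a ha x hxL).1⟩⟩
    rw [h1] at hxa hax
    exact ⟨by simpa using hxa, by simpa using hax⟩
  rw [haJ] at h2
  rw [Submodule.eq_bot_iff]
  intro x hx
  have hxI : x ∈ annLSub b L I := by
    refine ⟨hx.1, fun a ha => ?_⟩
    have haL : a ∈ L := hI.1 ha
    have h3 : b x a ∈ annLSub b L (I ⊓ J) ⊓ I :=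
      Submodule.mem_inf.2 ⟨(hKid.2 _ hx a haL).1, (hI.2 a ha x hx.1).2⟩
    have h4 : b a x ∈ annLSub b L (I ⊓ J) ⊓ I :=
      Submodule.mem_inf.2 ⟨(hKid.2 _ hx a haL).2, (hI.2 a ha x hx.1).1⟩
    exact ⟨by simpa using h2 h3, by simpa using h2 h4⟩
  rw [haI] at hxI
  simpa using hxI

lemma annLSub_colonSub_bot (hq : IsAlgebraOfQuotients b L) (v : Q) :
    annLSub b L (colonSub b L v) = ⊥ := by
  rw [Submodule.eq_bot_iff]
  intro x hx
  by_contra hx0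
  rcases hq x v hx0 with ⟨y, hy, hne⟩ | ⟨y, hy, hne⟩
  · exact hne (hx.2 y hy).2
  · exact hne (hx.2 y hy).1

/-- From zero annihilator in `L` to zero annihilator in `Q`, via the quotient property. -/
lemma annQ_dense (hbr : IsRightLeibniz b) (hbl : IsLeftLeibniz b)
    (hq : IsAlgebraOfQuotients b L) {I : Submodule F Q} (hI : IsIdealOf b L I)
    (ha : annLSub b L I = ⊥) :
    ∀ w : Q, w ≠ 0 → ∃ a ∈ I, b a w ≠ 0 ∨ b w a ≠ 0 := by
  intro w hw
  by_contra hcon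
  push_neg at hcon
  rcases hq w w hw with ⟨y, hy, hne⟩ | ⟨y, hy, hne⟩
  · -- u = b y w
    have hyL : y ∈ L := hy.1
    have huL : b y w ∈ L := (hy.2 w (self_mem_LqSet b L w)).1
    have hu : b y w ∈ annLSub b L I := by
      refine ⟨huL, fun a ha' => ?_⟩
      constructor
      · have h := hbr y w a
        have e : b (b y w) a = b y (b w a) + b (b y a) w := by rw [h]; abel
        rw [e, (hcon a ha').2, (hcon _ ((hI.2 a ha' y hyL).2)).1]
        simp
      · rw [hbl a y w, (hcon _ ((hI.2 a ha' y hyL).1)).1, (hcon a ha').1]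
        simp
    rw [ha] at hu
    exact hne (by simpa using hu)
  · -- u = b w y
    have hyL : y ∈ L := hy.1
    have huL : b w y ∈ L := (hy.2 w (self_mem_LqSet b L w)).2
    have hu : b w y ∈ annLSub b L I := by
      refine ⟨huL, fun a ha' => ?_⟩
      constructor
      · have h := hbr w y a
        have e : b (b w y) a = b w (b y a) + b (b w a) y := by rw [h]; abel
        rw [e, (hcon _ ((hI.2 a ha' y hyL).2)).2, (hcon a ha').2]
        simp
      · rw [hbl a w y, (hcon a ha').1, (hcon _ ((hI.2 a ha' y hyL).1)).2]
        simp
    rw [ha] at hu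
    exact hne (by simpa using hu)

end Aux19


section Aux19b

variable (b : Q →ₗ[F] Q →ₗ[F] Q) (L : Submodule F Q)

/-- The fundamental commutation rule: in a symmetric Leibniz algebra, any two
multiplication operators commute up to a single multiplication operator. -/
lemma comm_apply (hbr : IsRightLeibniz b) (hbl : IsLeftLeibniz b)
    (a z p : Q) (t₁ t₂ : Bool) :
    opL b (a, t₁) (opL b (z, t₂) p) =
      opL b (z, t₂) (opL b (a, t₁) p) + opL b (if t₁ then b a z else b z a, t₂) p := by
  cases t₁ <;> cases t₂
  · show b.flip a (b.flip z p) = b.flip z (b.flip a p) + b.flip (b z a) p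
    simp only [LinearMap.flip_apply]
    rw [hbr p z a]; abel
  · show b.flip a (b z p) = b z (b.flip a p) + b (b z a) p
    simp only [LinearMap.flip_apply]
    rw [hbr z p a]; abel
  · show b a (b.flip z p) = b.flip z (b a p) + b.flip (b a z) p
    simp only [LinearMap.flip_apply]
    exact hbl a p z
  · show b a (b z p) = b z (b a p) + b (b a z) p
    rw [hbl a z p]; abel

/-- The intersection of `L` with the ideals `(L : v)`, `v ∈ V`. -/
noncomputable def KVsub : List Q → Submodule F Q
  | [] => L
  | v :: V => colonSub b L v ⊓ KVsub V

@[simp] lemma KVsub_nil : KVsub b L ([] : List Q) = L := rfl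

@[simp] lemma KVsub_cons (v : Q) (V : List Q) :
    KVsub b L (v :: V) = colonSub b L v ⊓ KVsub b L V := rfl

lemma KVsub_le_colon : ∀ {V : List Q} {v : Q}, v ∈ V → KVsub b L V ≤ colonSub b L v := by
  intro V
  induction V with
  | nil => intro v h; simp at h
  | cons u V ih =>
    intro v h
    rcases List.mem_cons.1 h with rfl | h
    · exact inf_le_left
    · exact le_trans inf_le_right (ih h)

lemma KVsub_isIdeal (hbr : IsRightLeibniz b) (hL : IsSubalgebraOf b L) :
    ∀ V : List Q, IsIdealOf b L (KVsub b L V) := by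
  intro V
  induction V with
  | nil => exact L_isIdeal b L hL
  | cons v V ih => exact inf_isIdeal b L (colonSub_isIdeal b L hbr hL v) ih

lemma KVsub_ann_bot (hbr : IsRightLeibniz b) (hL : IsSubalgebraOf b L)
    (hsp : IsSemiprimeSub b L) (hq : IsAlgebraOfQuotients b L) :
    ∀ V : List Q, annLSub b L (KVsub b L V) = ⊥ := by
  intro V
  induction V with
  | nil => exact annLSub_L_bot b L hbr hL hsp
  | cons v V ih =>
    exact annLSub_inf_bot b L hbr hL hsp (colonSub_isIdeal b L hbr hL v)
      (KVsub_isIdeal b L hbr hL V) (annLSub_colonSub_bot b L hq v) ih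

/-- The key migration lemma. -/
lemma mig (hbr : IsRightLeibniz b) (hbl : IsLeftLeibniz b) (hL : IsSubalgebraOf b L)
    {K : Submodule F Q} (hKL : K ≤ L)
    (hKid : ∀ x ∈ K, ∀ y ∈ L, b x y ∈ K ∧ b y x ∈ K) {k' : ℕ}
    (hP : ∀ Y W : List (Q × Bool), (∀ ℓ ∈ Y, ℓ.1 ∈ K) → k' ≤ Y.length →
      (∀ ℓ ∈ W, ℓ.1 ∈ L ∨ K ≤ colonSub b L ℓ.1) → vcnt L W ≤ k' →
      ∀ l ∈ L, evalW b (Y ++ W) l ∈ L) :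
    ∀ (β α : List (Q × Bool)) (c : Q) (t : Bool) (Y : List (Q × Bool)) (l : Q),
      (∀ ℓ ∈ Y, ℓ.1 ∈ K) → k' ≤ Y.length →
      (∀ ℓ ∈ α, ℓ.1 ∈ L ∨ K ≤ colonSub b L ℓ.1) →
      (∀ ℓ ∈ β, ℓ.1 ∈ L ∨ K ≤ colonSub b L ℓ.1) →
      vcnt L α + vcnt L β ≤ k' + 1 → 1 ≤ vcnt L β → c ∈ K → l ∈ L →
      evalW b (Y ++ α) (opL b (c, t) (evalW b β l)) ∈ L := by
  intro β
  induction β with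
  | nil =>
    intro α c t Y l _ _ _ _ _ hβ1 _ _
    rw [vcnt_nil] at hβ1; omega
  | cons ℓz β' ih =>
    intro α c t Y l hY hYlen hα hβ hsum hβ1 hc hl
    obtain ⟨z, t₂⟩ := ℓz
    have hβ'good : ∀ ℓ ∈ β', ℓ.1 ∈ L ∨ K ≤ colonSub b L ℓ.1 :=
      fun ℓ h => hβ ℓ (List.mem_cons_of_mem _ h)
    simp only [evalW_cons, Module.End.mul_apply]
    by_cases hz : z ∈ L
    · have hvz : vcnt L ((z, t₂) :: β') = vcnt L β' := by
        rw [vcnt_cons, if_pos hz, zero_add]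
      rw [comm_apply b hbr hbl c z (evalW b β' l) t t₂, map_add]
      refine add_mem ?_ ?_
      · have h1 := ih (α ++ [(z, t₂)]) c t Y l hY hYlen
          (fun ℓ h => by
            rcases List.mem_append.1 h with h | h
            · exact hα ℓ h
            · rw [List.mem_singleton.1 h]; exact Or.inl hz)
          hβ'good
          (by rw [vcnt_append, vcnt_cons, if_pos hz, vcnt_nil]; omega)
          (by omega) hc hl
        simp only [evalW_append, evalW_cons, evalW_nil, Module.End.mul_apply,
          Module.End.one_apply, mul_one] at h1 ⊢
        exact h1
      · have hc' : (if t then b c z else b z c) ∈ K := by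
          cases t
          · simpa using (hKid c hc z hz).2
          · simpa using (hKid c hc z hz).1
        exact ih α (if t then b c z else b z c) t₂ Y l hY hYlen hα hβ'good
          (by omega) (by omega) hc' hl
    · have hKcol : K ≤ colonSub b L z :=
        (hβ (z, t₂) (List.mem_cons_self)).resolve_left hz
      have hvz : vcnt L ((z, t₂) :: β') = 1 + vcnt L β' := by
        rw [vcnt_cons, if_neg hz]
      by_cases hb1 : 1 ≤ vcnt L β'
      · rw [comm_apply b hbr hbl c z (evalW b β' l) t t₂, map_add]
        refine add_mem ?_ ?_
        · have h1 := ih (α ++ [(z, t₂)]) c t Y l hY hYlen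
            (fun ℓ h => by
              rcases List.mem_append.1 h with h | h
              · exact hα ℓ h
              · rw [List.mem_singleton.1 h]; exact Or.inr hKcol)
            hβ'good
            (by rw [vcnt_append, vcnt_cons, if_neg hz, vcnt_nil]; omega)
            hb1 hc hl
          simp only [evalW_append, evalW_cons, evalW_nil, Module.End.mul_apply,
            Module.End.one_apply, mul_one] at h1 ⊢
          exact h1
        · have hcz : c ∈ colonSub b L z := hKcol hc
          have hcL : (if t then b c z else b z c) ∈ L := by
            cases t
            · simpa using (hcz.2 z (self_mem_LqSet b L z)).2
            · simpa using (hcz.2 z (self_mem_LqSet b L z)).1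
          have h2 := hP Y (α ++ (if t then b c z else b z c, t₂) :: β') hY hYlen
            (fun ℓ h => by
              rcases List.mem_append.1 h with h | h
              · exact hα ℓ h
              · rcases List.mem_cons.1 h with rfl | h
                · exact Or.inl hcL
                · exact hβ'good ℓ h)
            (by rw [vcnt_append, vcnt_cons, if_pos hcL]; omega)
            l hl
          simp only [evalW_append, evalW_cons, evalW_nil, Module.End.mul_apply,
            Module.End.one_apply, mul_one] at h2 ⊢
          exact h2
      · have hv0 : vcnt L β' = 0 := by omega
        have hvL : evalW b β' l ∈ L := evalW_mem_L b L hL β' (vcnt_eq_zero L β' hv0) l hl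
        have hm : opL b (z, t₂) (evalW b β' l) ∈ LqSet b L z := opL_mem_LqSet b L hvL t₂
        have hl₂ : opL b (c, t) (opL b (z, t₂) (evalW b β' l)) ∈ L :=
          colonSub_opL b L (hKcol hc) hm t
        exact hP Y α hY hYlen hα (by omega) _ hl₂

/-- Absorption: a sufficiently long word with letters in `K` composed with a word
with at most `k` letters outside `L` maps `L` into `L`. -/
lemma absorbP (hbr : IsRightLeibniz b) (hbl : IsLeftLeibniz b) (hL : IsSubalgebraOf b L)
    {K : Submodule F Q} (hKL : K ≤ L)
    (hKid : ∀ x ∈ K, ∀ y ∈ L, b x y ∈ K ∧ b y x ∈ K) :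
    ∀ k : ℕ, ∀ Y W : List (Q × Bool), (∀ ℓ ∈ Y, ℓ.1 ∈ K) → k ≤ Y.length →
      (∀ ℓ ∈ W, ℓ.1 ∈ L ∨ K ≤ colonSub b L ℓ.1) → vcnt L W ≤ k →
      ∀ l ∈ L, evalW b (Y ++ W) l ∈ L := by
  intro k
  induction k with
  | zero =>
    intro Y W hY _ hW hcnt l hl
    have hWL : ∀ ℓ ∈ W, ℓ.1 ∈ L := vcnt_eq_zero L W (by omega)
    have h1 : evalW b W l ∈ L := evalW_mem_L b L hL W hWL l hl
    have h2 : evalW b Y (evalW b W l) ∈ L :=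
      evalW_mem_L b L hL Y (fun ℓ h => hKL (hY ℓ h)) _ h1
    simpa [evalW_append, Module.End.mul_apply] using h2
  | succ k' ihk =>
    intro Y W hY hYlen hW hcnt l hl
    by_cases h0 : vcnt L W = 0
    · have hWL : ∀ ℓ ∈ W, ℓ.1 ∈ L := vcnt_eq_zero L W h0
      have h1 : evalW b W l ∈ L := evalW_mem_L b L hL W hWL l hl
      have h2 : evalW b Y (evalW b W l) ∈ L :=
        evalW_mem_L b L hL Y (fun ℓ h => hKL (hY ℓ h)) _ h1
      simpa [evalW_append, Module.End.mul_apply] using h2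
    · have hW1 : 1 ≤ vcnt L W := by omega
      have hYne : Y ≠ [] := by
        intro h
        rw [h] at hYlen
        simp at hYlen
      obtain ⟨Y', ℓb, hYeq⟩ : ∃ Y' ℓb, Y = Y' ++ [ℓb] :=
        ⟨Y.dropLast, Y.getLast hYne, (List.dropLast_append_getLast hYne).symm⟩
      subst hYeq
      have hY' : ∀ ℓ ∈ Y', ℓ.1 ∈ K := fun ℓ h => hY ℓ (List.mem_append_left _ h)
      have hb : ℓb.1 ∈ K := hY ℓb (List.mem_append_right _ (List.mem_singleton.2 rfl))
      have hY'len : k' ≤ Y'.length := by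
        rw [List.length_append, List.length_singleton] at hYlen; omega
      have hmig := mig b L hbr hbl hL hKL hKid ihk W [] ℓb.1 ℓb.2 Y' l hY' hY'len
        (by simp) hW (by rw [vcnt_nil]; omega) hW1 hb hl
      simp only [evalW_append, evalW_cons, evalW_nil, Module.End.mul_apply,
        Module.End.one_apply, mul_one, List.append_nil, Prod.mk.eta] at hmig ⊢
      exact hmig

/-- The set of operators given by nonzero words with letters in `V` of length at most `k`. -/
noncomputable def WordSet (V : List Q) (k : ℕ) : Set (Module.End F Q) :=
  {μ | ∃ w : List (Q × Bool), w ≠ [] ∧ w.length ≤ k ∧ (∀ ℓ ∈ w, ℓ.1 ∈ V) ∧ evalW b w = μ}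

lemma wordSet_mono {V V' : List Q} {k k' : ℕ} (hV : ∀ v ∈ V, v ∈ V') (hk : k ≤ k') :
    WordSet b V k ⊆ WordSet b V' k' := by
  rintro μ ⟨w, h1, h2, h3, h4⟩
  exact ⟨w, h1, h2.trans hk, fun ℓ h => hV _ (h3 ℓ h), h4⟩

lemma span_wordSet_mul {V₁ V₂ : List Q} {k₁ k₂ : ℕ} {x y : Module.End F Q}
    (hx : x ∈ Submodule.span F (WordSet b V₁ k₁))
    (hy : y ∈ Submodule.span F (WordSet b V₂ k₂)) :
    x * y ∈ Submodule.span F (WordSet b (V₁ ++ V₂) (k₁ + k₂)) := by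
  induction hx using Submodule.span_induction with
  | mem μ hμ =>
    induction hy using Submodule.span_induction with
    | mem ν hν =>
      obtain ⟨w₁, hw1, hl1, hm1, he1⟩ := hμ
      obtain ⟨w₂, hw2, hl2, hm2, he2⟩ := hν
      refine Submodule.subset_span
        ⟨w₁ ++ w₂, ?_, ?_, ?_, by rw [evalW_append, he1, he2]⟩
      · intro h
        rcases List.append_eq_nil_iff.1 h with ⟨h1, -⟩
        exact hw1 h1
      · rw [List.length_append]; omega
      · intro ℓ h
        rcases List.mem_append.1 h with h | h
        · exact List.mem_append_left _ (hm1 ℓ h)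
        · exact List.mem_append_right _ (hm2 ℓ h)
    | zero => rw [mul_zero]; exact zero_mem _
    | add u v hu hv ihu ihv => rw [mul_add]; exact add_mem ihu ihv
    | smul a u hu ihu => rw [mul_smul_comm]; exact Submodule.smul_mem _ a ihu
  | zero => rw [zero_mul]; exact zero_mem _
  | add u v hu hv ihu ihv => rw [add_mul]; exact add_mem ihu ihv
  | smul a u hu ihu => rw [smul_mul_assoc]; exact Submodule.smul_mem _ a ihu

lemma rep_adjoin {q : Module.End F Q}
    (hqA : q ∈ NonUnitalAlgebra.adjoin F (mulOps b (Set.univ : Set Q))) :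
    ∃ (V : List Q) (k : ℕ), 1 ≤ k ∧ q ∈ Submodule.span F (WordSet b V k) := by
  induction hqA using NonUnitalAlgebra.adjoin_induction with
  | mem x hx =>
    obtain ⟨u, -, hu⟩ := hx
    refine ⟨[u], 1, le_rfl, Submodule.subset_span ?_⟩
    rcases hu with hu | hu
    · exact ⟨[(u, false)], by simp, by simp, by simp, by simp [evalW, opL, hu]⟩
    · exact ⟨[(u, true)], by simp, by simp, by simp, by simp [evalW, opL, hu]⟩
  | add x y hx hy ihx ihy =>
    obtain ⟨V₁, k₁, hk₁, h₁⟩ := ihx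
    obtain ⟨V₂, k₂, hk₂, h₂⟩ := ihy
    refine ⟨V₁ ++ V₂, max k₁ k₂, le_trans hk₁ (le_max_left _ _), add_mem ?_ ?_⟩
    · exact Submodule.span_mono
        (wordSet_mono b (fun v h => List.mem_append_left _ h) (le_max_left _ _)) h₁
    · exact Submodule.span_mono
        (wordSet_mono b (fun v h => List.mem_append_right _ h) (le_max_right _ _)) h₂
  | zero => exact ⟨[], 1, le_rfl, zero_mem _⟩
  | mul x y hx hy ihx ihy =>
    obtain ⟨V₁, k₁, hk₁, h₁⟩ := ihx
    obtain ⟨V₂, k₂, hk₂, h₂⟩ := ihy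
    exact ⟨V₁ ++ V₂, k₁ + k₂, by omega, span_wordSet_mul b h₁ h₂⟩
  | smul a x hx ihx =>
    obtain ⟨V₁, k₁, hk₁, h₁⟩ := ihx
    exact ⟨V₁, k₁, hk₁, Submodule.smul_mem _ a h₁⟩

lemma opL_mem_adjoin (ℓ : Q × Bool) :
    opL b ℓ ∈ NonUnitalAlgebra.adjoin F (mulOps b (Set.univ : Set Q)) := by
  apply NonUnitalAlgebra.subset_adjoin (R := F)
  obtain ⟨z, t⟩ := ℓ
  refine ⟨z, Set.mem_univ z, ?_⟩
  cases t
  · exact Or.inl (by simp [opL])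
  · exact Or.inr (by simp [opL])

lemma evalW_mem_adjoin :
    ∀ w : List (Q × Bool), w ≠ [] →
      evalW b w ∈ NonUnitalAlgebra.adjoin F (mulOps b (Set.univ : Set Q)) := by
  intro w
  induction w with
  | nil => intro h; exact absurd rfl h
  | cons ℓ w ih =>
    intro _
    rcases eq_or_ne w [] with rfl | hw
    · simpa [evalW] using opL_mem_adjoin b ℓ
    · rw [evalW_cons]
      exact mul_mem (opL_mem_adjoin b ℓ) (ih hw)

lemma chainW {K : Submodule F Q}
    (hdense : ∀ w : Q, w ≠ 0 → ∃ a ∈ K, b a w ≠ 0 ∨ b w a ≠ 0) :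
    ∀ (k : ℕ) (μ : Module.End F Q), μ ≠ 0 →
      ∃ Y : List (Q × Bool), Y.length = k ∧ (∀ ℓ ∈ Y, ℓ.1 ∈ K) ∧ evalW b Y * μ ≠ 0 := by
  intro k
  induction k with
  | zero => intro μ hμ; exact ⟨[], rfl, by simp, by simpa using hμ⟩
  | succ k' ih =>
    intro μ hμ
    obtain ⟨Y, hYl, hYK, hne⟩ := ih μ hμ
    have hex : ∃ s, (evalW b Y * μ) s ≠ 0 := by
      by_contra h
      push_neg at h
      exact hne (LinearMap.ext fun s => by simpa using h s)
    obtain ⟨s, hs⟩ := hex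
    obtain ⟨a, haK, hcase⟩ := hdense _ hs
    rcases hcase with h | h
    · refine ⟨(a, true) :: Y, by simp [hYl], ?_, ?_⟩
      · intro ℓ hℓ
        rcases List.mem_cons.1 hℓ with rfl | hℓ
        · exact haK
        · exact hYK ℓ hℓ
      · intro h0
        have he : (evalW b ((a, true) :: Y) * μ) s = b a ((evalW b Y * μ) s) := by
          simp [evalW_cons, Module.End.mul_apply, opL]
        rw [h0] at he
        exact h (by simpa using he.symm)
    · refine ⟨(a, false) :: Y, by simp [hYl], ?_, ?_⟩
      · intro ℓ hℓ
        rcases List.mem_cons.1 hℓ with rfl | hℓ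
        · exact haK
        · exact hYK ℓ hℓ
      · intro h0
        have he : (evalW b ((a, false) :: Y) * μ) s = b ((evalW b Y * μ) s) a := by
          simp [evalW_cons, Module.End.mul_apply, opL]
        rw [h0] at he
        exact h (by simpa using he.symm)

end Aux19b


/-- Let `L` be a semiprime subalgebra of a symmetric Leibniz algebra `Q`
such that `Q` is an algebra of quotients of `L`. Then `A(Q)` is a left quotient algebra
of `A_0 = {μ ∈ A(Q) : μ(L) ⊆ L}`. -/
theorem AQ_leftQuotient_of_A0 {F : Type*} [Field F] {Q : Type*} [AddCommGroup Q]
    [Module F Q] (b : Q →ₗ[F] Q →ₗ[F] Q) (hbr : IsRightLeibniz b)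
    (hbl : IsLeftLeibniz b) (L : Submodule F Q) (hL : IsSubalgebraOf b L)
    (hsp : IsSemiprimeSub b L) (hq : IsAlgebraOfQuotients b L) :
    ∀ p q : Module.End F Q,
      p ∈ NonUnitalAlgebra.adjoin F (mulOps b (Set.univ : Set Q)) →
      q ∈ NonUnitalAlgebra.adjoin F (mulOps b (Set.univ : Set Q)) →
      p ≠ 0 →
      ∃ x ∈ NonUnitalAlgebra.adjoin F (mulOps b (Set.univ : Set Q)),
        (∀ l ∈ L, x l ∈ L) ∧ x * p ≠ 0 ∧
        x * q ∈ NonUnitalAlgebra.adjoin F (mulOps b (Set.univ : Set Q)) ∧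
        (∀ l ∈ L, (x * q) l ∈ L) := by
  intro p q hpA hqA hp0
  obtain ⟨V, k, hk1, hqspan⟩ := rep_adjoin b hqA
  have hKid : IsIdealOf b L (KVsub b L V) := KVsub_isIdeal b L hbr hL V
  have hKann : annLSub b L (KVsub b L V) = ⊥ := KVsub_ann_bot b L hbr hL hsp hq V
  have hdense := annQ_dense b L hbr hbl hq hKid hKann
  obtain ⟨Y, hYlen, hYK, hYne0⟩ := chainW b hdense k p hp0
  have hYnil : Y ≠ [] := by
    intro h
    rw [h] at hYlen
    simp at hYlen
    omega
  refine ⟨evalW b Y, evalW_mem_adjoin b Y hYnil, ?_, hYne0,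
    mul_mem (evalW_mem_adjoin b Y hYnil) hqA, ?_⟩
  · intro l hl
    exact evalW_mem_L b L hL Y (fun ℓ h => hKid.1 (hYK ℓ h)) l hl
  · intro l hl
    rw [Module.End.mul_apply]
    clear hqA
    induction hqspan using Submodule.span_induction with
    | mem μ hμ =>
      obtain ⟨w, hwne, hwlen, hwV, hweval⟩ := hμ
      have habs := absorbP b L hbr hbl hL hKid.1 hKid.2 k Y w hYK (le_of_eq hYlen.symm)
        (fun ℓ h => Or.inr (KVsub_le_colon b L (hwV ℓ h)))
        ((vcnt_le_length L w).trans hwlen) l hl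
      rw [← hweval]
      simpa [evalW_append, Module.End.mul_apply] using habs
    | zero => simpa using zero_mem L
    | add u v hu hv ihu ihv =>
      rw [LinearMap.add_apply, map_add]
      exact add_mem ihu ihv
    | smul a u hu ihu =>
      rw [LinearMap.smul_apply, map_smul]
      exact Submodule.smul_mem _ a ihu


end LeibnizQuot
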